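/- Marginal preservation (core of Theorem 2): let t ∈ [0,1] and Δt ∈ [0, 1−t], and let (Z, W) be a pair of real-valued random variables whose joint density with respect to Lebesgue measure on ℝ² is (x, v) ↦ ρ₀(x − tv) ρ₁(x + (1−t)v) (i.e., Z ~ ρ_t and, conditionally on Z = x, W has density π₁(·; x, t)). Then Z + Δt · W has the same law as X_{t+Δt} = (1−t−Δt)X₀ + (t+Δt)X₁; in particular its density is ρ_{t+Δt}. -/

import Mathlib

open MeasureTheory ProbabilityTheory ENNReal


/-- A shear `(x, v) ↦ (x, v + c·x)` preserves Lebesgue measure on `ℝ × ℝ`. -/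
lemma shear_measurePreserving (c : ℝ) :
    MeasurePreserving (fun p : ℝ × ℝ => (p.1, p.2 + c * p.1))
      (volume : Measure (ℝ × ℝ)) volume := by
  rw [Measure.volume_eq_prod]
  exact (MeasurePreserving.id volume).skew_product
    (by fun_prop) (Filter.Eventually.of_forall fun a => map_add_right_eq_self volume (c * a))

lemma T_measurePreserving (t : ℝ) :
    MeasurePreserving (fun p : ℝ × ℝ => (p.1 - t * p.2, p.1 + (1 - t) * p.2))
      (volume : Measure (ℝ × ℝ)) volume := by
  have h1 : MeasurePreserving (fun p : ℝ × ℝ => (p.1 + (-t) * p.2, p.2))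
      (volume : Measure (ℝ × ℝ)) volume := by
    have := (shear_measurePreserving (-t)).comp
      (by rw [Measure.volume_eq_prod]; exact Measure.measurePreserving_swap)
    have h2 := (by rw [Measure.volume_eq_prod]; exact Measure.measurePreserving_swap :
      MeasurePreserving Prod.swap (volume : Measure (ℝ × ℝ)) volume).comp this
    convert h2 using 1
    · rfl
    · funext p; rfl
    · exact Measure.volume_eq_prod _ _
  have h3 := (shear_measurePreserving 1).comp h1
  convert h3 using 1
  funext p
  simp only [Function.comp_apply]
  exact Prod.ext (by ring) (by ring)


/-- The change of variables `(x, v) ↦ (x − tv, x + (1−t)v)` as a measurable equivalence. -/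
noncomputable def Tequiv (t : ℝ) : (ℝ × ℝ) ≃ᵐ (ℝ × ℝ) where
  toFun p := (p.1 - t * p.2, p.1 + (1 - t) * p.2)
  invFun q := ((1 - t) * q.1 + t * q.2, q.2 - q.1)
  left_inv p := Prod.ext (by simp; ring) (by simp; ring)
  right_inv q := Prod.ext (by simp; ring) (by simp; ring)
  measurable_toFun := by
    show Measurable fun p : ℝ × ℝ => (p.1 - t * p.2, p.1 + (1 - t) * p.2); fun_prop
  measurable_invFun := by
    show Measurable fun q : ℝ × ℝ => ((1 - t) * q.1 + t * q.2, q.2 - q.1); fun_prop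

/-- Pushing forward a `withDensity (g ∘ T)` along a measure-preserving embedding `T`. -/
lemma map_withDensity_comp {T : ℝ × ℝ → ℝ × ℝ} (hT : MeasurePreserving T
    (volume : Measure (ℝ × ℝ)) volume) (hTe : MeasurableEmbedding T)
    {g : ℝ × ℝ → ℝ≥0∞} (hg : Measurable g) :
    Measure.map T (volume.withDensity (g ∘ T)) = volume.withDensity g := by
  ext s hs
  rw [Measure.map_apply hT.measurable hs, withDensity_apply _ (hT.measurable hs),
    withDensity_apply _ hs]
  exact hT.setLIntegral_comp_preimage_emb hTe g s

lemma prod_withDensity_eq (f₀ f₁ : ℝ → ℝ≥0∞) (hf₀ : Measurable f₀) (hf₁ : Measurable f₁)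
    (h₀ : ∫⁻ x, f₀ x = 1) (h₁ : ∫⁻ x, f₁ x = 1) :
    (volume.withDensity f₀).prod (volume.withDensity f₁)
      = (volume : Measure (ℝ × ℝ)).withDensity (fun p => f₀ p.1 * f₁ p.2) := by
  have i₀ : IsProbabilityMeasure (volume.withDensity f₀) :=
    ⟨by rw [withDensity_apply _ MeasurableSet.univ, Measure.restrict_univ, h₀]⟩
  have i₁ : IsProbabilityMeasure (volume.withDensity f₁) :=
    ⟨by rw [withDensity_apply _ MeasurableSet.univ, Measure.restrict_univ, h₁]⟩
  rw [Measure.volume_eq_prod]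
  refine Measure.prod_eq fun s u hs hu => ?_
  rw [withDensity_apply _ (hs.prod hu), ← Measure.prod_restrict,
    lintegral_prod_mul hf₀.aemeasurable hf₁.aemeasurable,
    withDensity_apply _ hs, withDensity_apply _ hu]

/-- marginal preservation: let `t ∈ [0,1]`, `Δt ∈ [0, 1−t]`, and let
`(Z, W)` be a pair of real random variables whose joint density w.r.t. Lebesgue
measure on ℝ² is `(x, v) ↦ ρ₀(x − tv) ρ₁(x + (1−t)v)` (i.e. `Z ~ ρ_t` and,
conditionally on `Z = x`, `W ~ π₁(·; x, t)`).  Then `Z + Δt·W` has the same law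
as `X_{t+Δt} = (1−t−Δt)X₀ + (t+Δt)X₁`; in particular its density is `ρ_{t+Δt}`. -/
theorem marginal_preservation
    {Ω : Type*} [MeasurableSpace Ω] (P : Measure Ω) [IsProbabilityMeasure P]
    (ρ₀ ρ₁ : ℝ → ℝ) (hρ₀m : Measurable ρ₀) (hρ₁m : Measurable ρ₁)
    (hρ₀nn : ∀ x, 0 ≤ ρ₀ x) (hρ₁nn : ∀ x, 0 ≤ ρ₁ x)
    (hρ₀1 : ∫⁻ x, ENNReal.ofReal (ρ₀ x) ∂(volume : Measure ℝ) = 1)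
    (hρ₁1 : ∫⁻ x, ENNReal.ofReal (ρ₁ x) ∂(volume : Measure ℝ) = 1)
    (X₀ X₁ : Ω → ℝ) (hX₀m : Measurable X₀) (hX₁m : Measurable X₁)
    (hindep : IndepFun X₀ X₁ P)
    (hX₀ : Measure.map X₀ P = volume.withDensity (fun x => ENNReal.ofReal (ρ₀ x)))
    (hX₁ : Measure.map X₁ P = volume.withDensity (fun x => ENNReal.ofReal (ρ₁ x)))
    (t Δt : ℝ) (ht : t ∈ Set.Icc (0 : ℝ) 1) (hΔt : Δt ∈ Set.Icc (0 : ℝ) (1 - t))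
    (Z W : Ω → ℝ) (hZm : Measurable Z) (hWm : Measurable W)
    (hZW : Measure.map (fun ω => (Z ω, W ω)) P
      = (volume : Measure (ℝ × ℝ)).withDensity
          (fun p => ENNReal.ofReal (ρ₀ (p.1 - t * p.2) * ρ₁ (p.1 + (1 - t) * p.2)))) :
    Measure.map (fun ω => Z ω + Δt * W ω) P
      = Measure.map (fun ω => (1 - t - Δt) * X₀ ω + (t + Δt) * X₁ ω) P := by
  have hT := T_measurePreserving t
  have hTe : MeasurableEmbedding (fun p : ℝ × ℝ => (p.1 - t * p.2, p.1 + (1 - t) * p.2)) :=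
    (Tequiv t).measurableEmbedding
  set g : ℝ × ℝ → ℝ≥0∞ := fun p => ENNReal.ofReal (ρ₀ p.1) * ENNReal.ofReal (ρ₁ p.2) with hg
  have hgm : Measurable g := by fun_prop
  have hL : Measure.map (fun ω => Z ω + Δt * W ω) P
      = Measure.map (fun q : ℝ × ℝ => (1 - t - Δt) * q.1 + (t + Δt) * q.2)
          (volume.withDensity g) := by
    have h1 : (fun ω => Z ω + Δt * W ω)
        = (fun p : ℝ × ℝ => p.1 + Δt * p.2) ∘ (fun ω => (Z ω, W ω)) := rfl
    rw [h1, ← Measure.map_map (by fun_prop) (hZm.prodMk hWm), hZW]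
    have h2 : (fun p : ℝ × ℝ => ENNReal.ofReal (ρ₀ (p.1 - t * p.2) * ρ₁ (p.1 + (1 - t) * p.2)))
        = g ∘ (fun p : ℝ × ℝ => (p.1 - t * p.2, p.1 + (1 - t) * p.2)) := by
      funext p
      exact ENNReal.ofReal_mul (hρ₀nn _)
    rw [h2, ← map_withDensity_comp hT hTe hgm,
      Measure.map_map (by fun_prop) hT.measurable]
    congr 1
    funext p
    simp only [Function.comp_apply]
    ring
  have hR : Measure.map (fun ω => (1 - t - Δt) * X₀ ω + (t + Δt) * X₁ ω) P
      = Measure.map (fun q : ℝ × ℝ => (1 - t - Δt) * q.1 + (t + Δt) * q.2)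
          (volume.withDensity g) := by
    have h1 : (fun ω => (1 - t - Δt) * X₀ ω + (t + Δt) * X₁ ω)
        = (fun q : ℝ × ℝ => (1 - t - Δt) * q.1 + (t + Δt) * q.2)
          ∘ (fun ω => (X₀ ω, X₁ ω)) := rfl
    rw [h1, ← Measure.map_map (by fun_prop) (hX₀m.prodMk hX₁m)]
    congr 1
    rw [(indepFun_iff_map_prod_eq_prod_map_map hX₀m.aemeasurable hX₁m.aemeasurable).mp hindep,
      hX₀, hX₁]
    exact prod_withDensity_eq _ _ (by fun_prop) (by fun_prop) hρ₀1 hρ₁1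
  rw [hL, hR]
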